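/- Let $\vec{P}=(p_1,p_2)$ with $1<p_1,p_2<\infty$ and $1/p=1/p_1+1/p_2$, and let $\vec{w}=(w_1,w_2)\in A_{\vec{P}}$. Then the product weight $v_{\vec{w}}=w_1^{p/p_1}w_2^{p/p_2}$ satisfies $[v_{\vec{w}}]_{A_{2p}}\le[\vec{w}]_{A_{\vec{P}}}$. -/

import Mathlib

open MeasureTheory Set ENNReal

noncomputable section

/-- Euclidean space `ℝⁿ`. -/
abbrev Rn (n : ℕ) := Fin n → ℝ

/-- `Q` is an axis-parallel (half-open) cube of sidelength `h`. -/
def HasSide {n : ℕ} (Q : Set (Rn n)) (h : ℝ) : Prop :=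
  ∃ c : Rn n, Q = {x | ∀ i, c i ≤ x i ∧ x i < c i + h}

/-- `Q` is an axis-parallel cube (with positive sidelength). -/
def IsCube {n : ℕ} (Q : Set (Rn n)) : Prop :=
  ∃ h : ℝ, 0 < h ∧ HasSide Q h

/-- A dyadic cubes system: cubes of sidelengths `2^k`, pairwise nested or disjoint,
and for each fixed `k` the cubes of sidelength `2^k` cover (hence partition) `ℝⁿ`. -/
def IsDyadicSystem {n : ℕ} (D : Set (Set (Rn n))) : Prop :=
  (∀ Q ∈ D, ∃ k : ℤ, HasSide Q ((2 : ℝ) ^ k)) ∧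
  (∀ Q ∈ D, ∀ R ∈ D, Q ∩ R = Q ∨ Q ∩ R = R ∨ Q ∩ R = ∅) ∧
  (∀ k : ℤ, ∀ x : Rn n, ∃ Q ∈ D, HasSide Q ((2 : ℝ) ^ k) ∧ x ∈ Q)

/-- A sparse family: each `Q` carries a measurable subset `E Q ⊆ Q` with
`|E Q| ≥ |Q|/2`, the sets `E Q` being pairwise disjoint. -/
def IsSparse {n : ℕ} (S : Set (Set (Rn n))) : Prop :=
  ∃ E : Set (Rn n) → Set (Rn n),
    (∀ Q ∈ S, E Q ⊆ Q ∧ MeasurableSet (E Q) ∧ volume Q ≤ 2 * volume (E Q)) ∧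
    S.Pairwise fun Q R => Disjoint (E Q) (E R)

/-- A weight: a measurable nonnegative (`ℝ≥0∞`-valued) locally integrable function. -/
def IsWeight {n : ℕ} (w : Rn n → ℝ≥0∞) : Prop :=
  Measurable w ∧ ∀ Q : Set (Rn n), IsCube Q → (∫⁻ x in Q, w x) ≠ ∞

/-- `w(Q) = ∫_Q w`. -/
def mass {n : ℕ} (w : Rn n → ℝ≥0∞) (Q : Set (Rn n)) : ℝ≥0∞ := ∫⁻ x in Q, w x

/-- `⟨w⟩_Q = w(Q)/|Q|`. -/
def avg {n : ℕ} (w : Rn n → ℝ≥0∞) (Q : Set (Rn n)) : ℝ≥0∞ := mass w Q / volume Q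

/-- The conjugate exponent `q' = q/(q-1)`. -/
def conj (q : ℝ) : ℝ := q / (q - 1)

/-- The product weight `v_w = w₁^{p/p₁} w₂^{p/p₂}`. -/
def vweight {n : ℕ} (p p1 p2 : ℝ) (w1 w2 : Rn n → ℝ≥0∞) : Rn n → ℝ≥0∞ :=
  fun x => w1 x ^ (p / p1) * w2 x ^ (p / p2)

/-- The dual weight `σ = w^{1-q'}`. -/
def dualW {n : ℕ} (q : ℝ) (w : Rn n → ℝ≥0∞) : Rn n → ℝ≥0∞ :=
  fun x => w x ^ (1 - conj q)

/-- The multilinear `A_{\vec P}` constant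
`[\vec w]_{A_{\vec P}} = sup_Q ⟨v_w⟩_Q ⟨σ₁⟩_Q^{p/p₁'} ⟨σ₂⟩_Q^{p/p₂'}`. -/
def APconst {n : ℕ} (p p1 p2 : ℝ) (w1 w2 : Rn n → ℝ≥0∞) : ℝ≥0∞ :=
  ⨆ (Q : Set (Rn n)) (_ : IsCube Q),
    avg (vweight p p1 p2 w1 w2) Q * avg (dualW p1 w1) Q ^ (p / conj p1) *
      avg (dualW p2 w2) Q ^ (p / conj p2)

/-- The (linear) `A_q` constant `[w]_{A_q} = sup_Q ⟨w⟩_Q ⟨w^{1-q'}⟩_Q^{q-1}`. -/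
def AqConst {n : ℕ} (q : ℝ) (w : Rn n → ℝ≥0∞) : ℝ≥0∞ :=
  ⨆ (Q : Set (Rn n)) (_ : IsCube Q),
    avg w Q * avg (fun x => w x ^ (1 - conj q)) Q ^ (q - 1)

/-- The Hardy–Littlewood maximal operator (over axis-parallel cubes). -/
def HLMax {n : ℕ} (w : Rn n → ℝ≥0∞) (x : Rn n) : ℝ≥0∞ :=
  ⨆ (Q : Set (Rn n)) (_ : IsCube Q) (_ : x ∈ Q), avg w Q

/-- The Fujii–Wilson `A_∞` constant `[w]_{A_∞} = sup_Q w(Q)⁻¹ ∫_Q M(wχ_Q)`. -/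
def AinfConst {n : ℕ} (w : Rn n → ℝ≥0∞) : ℝ≥0∞ :=
  ⨆ (Q : Set (Rn n)) (_ : IsCube Q), (∫⁻ x in Q, HLMax (Q.indicator w) x) / mass w Q

/-- `‖g‖_{L^p(v)}` for an `ℝ≥0∞`-valued function. -/
def lpNorm {n : ℕ} (g : Rn n → ℝ≥0∞) (p : ℝ) (v : Rn n → ℝ≥0∞) : ℝ≥0∞ :=
  (∫⁻ x, g x ^ p * v x) ^ (1 / p)

/-- `‖g‖_{L^{p,∞}(v)} = sup_{t>0} t · v({g > t})^{1/p}`. -/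
def wkNorm {n : ℕ} (g : Rn n → ℝ≥0∞) (p : ℝ) (v : Rn n → ℝ≥0∞) : ℝ≥0∞ :=
  ⨆ t : ℝ≥0∞, t * mass v {x | t < g x} ^ (1 / p)

/-- The pointwise `ℝ≥0∞`-valued absolute value of a real function. -/
def eAbs {n : ℕ} (f : Rn n → ℝ) : Rn n → ℝ≥0∞ := fun x => (‖f x‖₊ : ℝ≥0∞)

/-- `f ∈ L^p(v)`. -/
def MemLpW {n : ℕ} (f : Rn n → ℝ) (p : ℝ) (v : Rn n → ℝ≥0∞) : Prop :=
  Measurable f ∧ lpNorm (eAbs f) p v ≠ ∞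

/-- The bilinear sparse operator `A_{D,S}(g₁,g₂) = ∑_{Q∈S} ⟨g₁⟩_Q ⟨g₂⟩_Q χ_Q`. -/
def sparseOp {n : ℕ} (S : Set (Set (Rn n))) (g1 g2 : Rn n → ℝ≥0∞) (x : Rn n) : ℝ≥0∞ :=
  ∑' Q : S, Set.indicator (Q : Set (Rn n)) (fun _ => avg g1 Q * avg g2 Q) x

/-- The weighted average `⟨f⟩_Q^w = (∫_Q |f| w)/w(Q)`. -/
def wAvg {n : ℕ} (f : Rn n → ℝ) (w : Rn n → ℝ≥0∞) (Q : Set (Rn n)) : ℝ≥0∞ :=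
  (∫⁻ x in Q, (‖f x‖₊ : ℝ≥0∞) * w x) / mass w Q


/-- The exponent `β = 1/p + max{min{1/p₁', (1/p₁')(p₂'/p)}, min{1/p₂', (1/p₂')(p₁'/p)}}`. -/
def betaExp (p p1 p2 : ℝ) : ℝ :=
  1 / p + max (min (1 / conj p1) (1 / conj p1 * (conj p2 / p)))
              (min (1 / conj p2) (1 / conj p2 * (conj p1 / p)))

/-- The exponent `γ = max{1, p₁'/p, p₂'/p}`. -/
def gammaExp (p p1 p2 : ℝ) : ℝ := max 1 (max (conj p1 / p) (conj p2 / p))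

end

/-- `[v_{\vec w}]_{A_{2p}} ≤ [\vec w]_{A_{\vec P}}`. -/
theorem statement8 {n : ℕ} (p p1 p2 : ℝ)
    (hp1 : 1 < p1) (hp2 : 1 < p2) (hp : 1 / p = 1 / p1 + 1 / p2)
    (w1 w2 : Rn n → ℝ≥0∞) (hw1 : IsWeight w1) (hw2 : IsWeight w2)
    (hAP : APconst p p1 p2 w1 w2 ≠ ∞) :
    AqConst (2 * p) (vweight p p1 p2 w1 w2) ≤ APconst p p1 p2 w1 w2 := by
  clear hAP
  -- basic real facts
  have hp10 : (0:ℝ) < p1 := by linarith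
  have hp20 : (0:ℝ) < p2 := by linarith
  have hp11 : (0:ℝ) < p1 - 1 := by linarith
  have hp21 : (0:ℝ) < p2 - 1 := by linarith
  have hp0 : (0:ℝ) < p := by
    have h1 : 0 < 1/p := by rw [hp]; positivity
    exact one_div_pos.mp h1
  have h2p : (0:ℝ) < 2*p - 1 := by
    have h1 : 1/p < 2 := by
      have a1 : 1/p1 < 1 := by rw [div_lt_one hp10]; linarith
      have a2 : 1/p2 < 1 := by rw [div_lt_one hp20]; linarith
      rw [hp]; linarith
    have := (div_lt_iff₀ hp0).mp h1
    linarith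
  have hkey : p1 * p2 = p * (p1 + p2) := by
    field_simp at hp
    linarith
  have hc1 : conj p1 = p1 / (p1 - 1) := rfl
  have hc2 : conj p2 = p2 / (p2 - 1) := rfl
  have hc1pos : 0 < conj p1 := by rw [hc1]; positivity
  have hc2pos : 0 < conj p2 := by rw [hc2]; positivity
  set a : ℝ := p / conj p1 / (2*p - 1) with ha_def
  set b : ℝ := p / conj p2 / (2*p - 1) with hb_def
  have ha : 0 < a := by positivity
  have hb : 0 < b := by positivity
  have hab : a + b = 1 := by
    rw [ha_def, hb_def, hc1, hc2]
    field_simp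
    rw [div_eq_iff (by linarith)]
    linear_combination hkey
  have hE : 1 - conj (2*p) = -(1/(2*p-1)) := by
    show 1 - (2*p)/(2*p-1) = _
    field_simp
    ring
  have I1 : (p/p1) * (1 - conj (2*p)) = (1 - conj p1) * a := by
    rw [hE, ha_def, hc1]
    field_simp
    ring
  have I2 : (p/p2) * (1 - conj (2*p)) = (1 - conj p2) * b := by
    rw [hE, hb_def, hc2]
    field_simp
    ring
  have I3 : a * (2*p-1) = p / conj p1 := by
    rw [ha_def, div_mul_cancel₀ _ h2p.ne']
  have I4 : b * (2*p-1) = p / conj p2 := by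
    rw [hb_def, div_mul_cancel₀ _ h2p.ne']
  have ha1 : a < 1 := by linarith
  have hconjExp : (1/a).HolderConjugate (1/b) := by
    rw [Real.holderConjugate_iff]
    constructor
    · exact one_lt_one_div ha ha1
    · simp only [one_div, inv_inv]; exact hab
  -- main per-cube estimate
  rw [AqConst]
  refine iSup₂_le fun Q hQ => ?_
  set v := vweight p p1 p2 w1 w2 with hv
  set σ1 := dualW p1 w1 with hσ1
  set σ2 := dualW p2 w2 with hσ2
  -- volume of the cube
  obtain ⟨h, hh, c, hQc⟩ := hQ
  have hVol : volume Q = ENNReal.ofReal h ^ n := by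
    have : Q = Set.pi univ (fun i => Ico (c i) (c i + h)) := by
      rw [hQc]; ext x; simp [Set.mem_pi]
    rw [this, volume_pi_pi]
    simp [Real.volume_Ico]
  have hV0 : volume Q ≠ 0 := by
    rw [hVol]
    simp only [ne_eq, pow_eq_zero_iff', ENNReal.ofReal_eq_zero, not_and_or, not_le]
    left; exact hh
  have hVt : volume Q ≠ ∞ := by
    rw [hVol]
    exact pow_ne_top ofReal_ne_top
  -- a.e. finiteness of the weights on Q
  have hae1 : ∀ᵐ x ∂(volume.restrict Q), w1 x < ∞ :=
    ae_lt_top hw1.1 (hw1.2 Q ⟨h, hh, c, hQc⟩)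
  have hae2 : ∀ᵐ x ∂(volume.restrict Q), w2 x < ∞ :=
    ae_lt_top hw2.1 (hw2.2 Q ⟨h, hh, c, hQc⟩)
  -- pointwise identity
  have haeEq : ∀ᵐ x ∂(volume.restrict Q),
      v x ^ (1 - conj (2*p)) = σ1 x ^ a * σ2 x ^ b := by
    filter_upwards [hae1, hae2] with x h1 h2
    rw [hv, hσ1, hσ2]
    show (w1 x ^ (p/p1) * w2 x ^ (p/p2)) ^ (1 - conj (2*p))
        = (w1 x ^ (1 - conj p1)) ^ a * (w2 x ^ (1 - conj p2)) ^ b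
    rw [ENNReal.mul_rpow_of_ne_top
        (ENNReal.rpow_ne_top_of_nonneg (by positivity) h1.ne)
        (ENNReal.rpow_ne_top_of_nonneg (by positivity) h2.ne),
      ← ENNReal.rpow_mul, ← ENNReal.rpow_mul, ← ENNReal.rpow_mul, ← ENNReal.rpow_mul,
      I1, I2]
  -- Hölder
  have hσ1m : Measurable σ1 := hw1.1.pow_const _
  have hσ2m : Measurable σ2 := hw2.1.pow_const _
  have hHolder : mass (fun x => v x ^ (1 - conj (2*p))) Q
      ≤ mass σ1 Q ^ a * mass σ2 Q ^ b := by
    rw [mass, lintegral_congr_ae haeEq]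
    have := ENNReal.lintegral_mul_le_Lp_mul_Lq (volume.restrict Q) hconjExp
      ((hσ1m.pow_const a).aemeasurable) ((hσ2m.pow_const b).aemeasurable)
    simp only [Pi.mul_apply] at this
    calc ∫⁻ x in Q, σ1 x ^ a * σ2 x ^ b
        ≤ (∫⁻ x in Q, (σ1 x ^ a) ^ (1/a)) ^ (1/(1/a))
          * (∫⁻ x in Q, (σ2 x ^ b) ^ (1/b)) ^ (1/(1/b)) := this
      _ = mass σ1 Q ^ a * mass σ2 Q ^ b := by
          rw [one_div_one_div, one_div_one_div]
          congr 2 <;> [skip; skip] <;> first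
          | (apply lintegral_congr; intro x
             rw [← ENNReal.rpow_mul, mul_one_div_cancel ha.ne', ENNReal.rpow_one])
          | (apply lintegral_congr; intro x
             rw [← ENNReal.rpow_mul, mul_one_div_cancel hb.ne', ENNReal.rpow_one])
  -- conclude
  have hMain : avg (fun x => v x ^ (1 - conj (2*p))) Q ^ (2*p - 1)
      ≤ avg σ1 Q ^ (p / conj p1) * avg σ2 Q ^ (p / conj p2) := by
    have h1 : avg (fun x => v x ^ (1 - conj (2*p))) Q
        ≤ (mass σ1 Q ^ a * mass σ2 Q ^ b) / volume Q :=
      ENNReal.div_le_div_right hHolder _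
    calc avg (fun x => v x ^ (1 - conj (2*p))) Q ^ (2*p-1)
        ≤ ((mass σ1 Q ^ a * mass σ2 Q ^ b) / volume Q) ^ (2*p-1) :=
          ENNReal.rpow_le_rpow h1 h2p.le
      _ = (avg σ1 Q ^ a * avg σ2 Q ^ b) ^ (2*p-1) := by
          congr 1
          have hVa0 : volume Q ^ a ≠ 0 := by
            simp [ENNReal.rpow_eq_zero_iff, hV0, hVt, ha, ha.le]
          have hVb0 : volume Q ^ b ≠ 0 := by
            simp [ENNReal.rpow_eq_zero_iff, hV0, hVt, hb, hb.le]
          have e1 : volume Q = volume Q ^ a * volume Q ^ b := by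
            rw [← ENNReal.rpow_add a b hV0 hVt, hab, ENNReal.rpow_one]
          rw [avg, avg, ENNReal.div_rpow_of_nonneg _ _ ha.le,
            ENNReal.div_rpow_of_nonneg _ _ hb.le, div_eq_mul_inv,
            div_eq_mul_inv, div_eq_mul_inv]
          conv_lhs => rw [e1]
          rw [ENNReal.mul_inv (Or.inl hVa0) (Or.inr hVb0)]
          ring
      _ = avg σ1 Q ^ (p / conj p1) * avg σ2 Q ^ (p / conj p2) := by
          rw [ENNReal.mul_rpow_of_nonneg _ _ h2p.le, ← ENNReal.rpow_mul,
            ← ENNReal.rpow_mul, I3, I4]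
  calc avg v Q * avg (fun x => v x ^ (1 - conj (2*p))) Q ^ (2*p - 1)
      ≤ avg v Q * (avg σ1 Q ^ (p / conj p1) * avg σ2 Q ^ (p / conj p2)) :=
        mul_le_mul_right hMain _
    _ = avg v Q * avg σ1 Q ^ (p / conj p1) * avg σ2 Q ^ (p / conj p2) :=
        (mul_assoc _ _ _).symm
    _ ≤ APconst p p1 p2 w1 w2 := by
        rw [APconst]
        exact le_iSup₂_of_le Q ⟨h, hh, c, hQc⟩ le_rfl
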